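/- Let F : [0,1] → ℝ be differentiable and strictly concave, and let 0 < μ1 < μ2 < 1. Define c = F'(μ1) − F'(μ2) and b = (F'(μ1)(1 − μ1) + F(μ1)) − (F'(μ2)(1 − μ2) + F(μ2)). Then c > 0, b > 0, c > b, μ1 < 1 − b/c < μ2, and the tangency conditions hold: F'(μ1) = F'(μ2) + c = (F(μ2) + b − c(1 − μ2) − F(μ1))/(μ2 − μ1). In particular, choosing ν = b/(1 + b) ∈ (0,1) and k = c/(1 + b) > 0 yields exactly these values of b = ν/(1−ν) and c = k/(1−ν) with c > b. -/

import Mathlib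

open scoped BigOperators

noncomputable section

/-- For a differentiable, strictly concave `F` on `[0,1]` and
`0 < μ1 < μ2 < 1`, setting `c = F'(μ1) − F'(μ2)` and
`b = (F'(μ1)(1 − μ1) + F(μ1)) − (F'(μ2)(1 − μ2) + F(μ2))` yields `c > 0`, `b > 0`,
`c > b`, the crossing point `1 − b/c` lies in `(μ1, μ2)`, the common-tangency
conditions hold, and the choice `ν = b/(1 + b)`, `k = c/(1 + b)` produces exactly
these values of `b = ν/(1−ν)` and `c = k/(1−ν)` with `c > b`. -/
theorem tangency_parameters_exist
    (F F' : ℝ → ℝ)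
    (hderiv : ∀ x ∈ Set.Icc (0 : ℝ) 1, HasDerivWithinAt F (F' x) (Set.Icc 0 1) x)
    (hconc : StrictConcaveOn ℝ (Set.Icc (0 : ℝ) 1) F)
    (μ1 μ2 : ℝ) (h1 : 0 < μ1) (h12 : μ1 < μ2) (h2 : μ2 < 1)
    (c b : ℝ)
    (hc : c = F' μ1 - F' μ2)
    (hb : b = (F' μ1 * (1 - μ1) + F μ1) - (F' μ2 * (1 - μ2) + F μ2)) :
    0 < c ∧ 0 < b ∧ b < c ∧
    μ1 < 1 - b / c ∧ 1 - b / c < μ2 ∧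
    F' μ1 = F' μ2 + c ∧
    F' μ1 = (F μ2 + b - c * (1 - μ2) - F μ1) / (μ2 - μ1) ∧
    b / (1 + b) ∈ Set.Ioo (0 : ℝ) 1 ∧ 0 < c / (1 + b) ∧
    b = (b / (1 + b)) / (1 - b / (1 + b)) ∧
    c = (c / (1 + b)) / (1 - b / (1 + b)) := by
  have hx1 : μ1 ∈ Set.Icc (0:ℝ) 1 := ⟨h1.le, (h12.trans h2).le⟩
  have hx2 : μ2 ∈ Set.Icc (0:ℝ) 1 := ⟨(h1.trans h12).le, h2.le⟩
  have hd : (0:ℝ) < μ2 - μ1 := by linarith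
  have hs1 : slope F μ1 μ2 < F' μ1 :=
    hconc.slope_lt_of_hasDerivWithinAt hx1 hx2 h12 (hderiv μ1 hx1)
  have hs2 : F' μ2 < slope F μ1 μ2 :=
    hconc.lt_slope_of_hasDerivWithinAt hx1 hx2 h12 (hderiv μ2 hx2)
  set s := slope F μ1 μ2 with hs
  have hsd : F μ2 - F μ1 = s * (μ2 - μ1) := by
    rw [hs, slope_def_field, div_mul_cancel₀]
    exact hd.ne'
  have hP1 : 0 < F' μ1 - s := by linarith
  have hP2 : 0 < s - F' μ2 := by linarith
  have hcpos : 0 < c := by rw [hc]; linarith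
  have hbval : b = (1 - μ1) * (F' μ1 - s) + (1 - μ2) * (s - F' μ2) := by
    rw [hb]; nlinarith [hsd]
  have hbpos : 0 < b := by
    rw [hbval]
    have := mul_pos (by linarith : (0:ℝ) < 1 - μ1) hP1
    have := mul_pos (by linarith : (0:ℝ) < 1 - μ2) hP2
    linarith
  have hbc : b < c := by
    rw [hbval, hc]
    nlinarith [mul_pos h1 hP1, mul_pos (h1.trans h12) hP2]
  have hlt1 : b < c * (1 - μ1) := by
    rw [hbval, hc]
    nlinarith [mul_pos hd hP2]
  have hlt2 : c * (1 - μ2) < b := by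
    rw [hbval, hc]
    nlinarith [mul_pos hd hP1]
  have h1b : (0:ℝ) < 1 + b := by linarith
  refine ⟨hcpos, hbpos, hbc, ?_, ?_, by rw [hc]; ring, ?_, ?_, ?_, ?_, ?_⟩
  · have : b / c < 1 - μ1 := (div_lt_iff₀ hcpos).2 (by linarith [hlt1])
    linarith
  · have : 1 - μ2 < b / c := (lt_div_iff₀ hcpos).2 (by linarith [hlt2])
    linarith
  · rw [hb, hc]
    field_simp
    ring
  · constructor
    · positivity
    · rw [div_lt_one h1b]; linarith
  · positivity
  · rw [eq_div_iff]
    · field_simp; ring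
    · have : 1 - b / (1 + b) = 1 / (1 + b) := by field_simp; ring
      rw [this]; positivity
  · rw [eq_div_iff]
    · field_simp; ring
    · have : 1 - b / (1 + b) = 1 / (1 + b) := by field_simp; ring
      rw [this]; positivity
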